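/- In the threshold activation model on a tree T, if the edge (v,w) is removed splitting T into subtrees T₁ (containing w) and T₂ (containing v), and a pervading link vector S for T activates v strictly after w, then the restriction of S to the nodes of T₁ is itself a pervading link vector for T₁ (with thresholds unchanged). -/

import Mathlib

open Finset
open scoped Classical

/-- Threshold activation process: `act G t s j` is the set of nodes active at step `j`,
given link vector `s` (partial incentives from external influencers). -/
noncomputable def act {V : Type*} [Fintype V] (G : SimpleGraph V) (t s : V → ℕ) :
    ℕ → Finset V
  | 0 => Finset.univ.filter (fun v => t v ≤ s v)
  | (j+1) => act G t s j ∪ Finset.univ.filter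
      (fun v => t v ≤ s v + ((act G t s j).filter (fun u => G.Adj u v)).card)

/-- A link vector `s` is pervading for `(G, t)` with `k` external influencers if each node
receives at most `k` links and the process eventually activates every node. -/
def Pervading {V : Type*} [Fintype V] (G : SimpleGraph V) (t s : V → ℕ) (k : ℕ) : Prop :=
  (∀ v, s v ≤ k) ∧ ∃ j, act G t s j = Finset.univ

lemma act_mono {V : Type*} [Fintype V] (G : SimpleGraph V) (t s : V → ℕ) :
    Monotone (act G t s) := by
  apply monotone_nat_of_le_succ
  intro n
  rw [act]
  exact Finset.subset_union_left

theorem tree_split_restriction_pervades {V : Type*} [Fintype V] [DecidableEq V]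
    (G : SimpleGraph V) (hT : G.IsTree) (t s : V → ℕ) (k : ℕ)
    (v w : V) (hadj : G.Adj v w)
    (hperv : Pervading G t s k)
    -- `v` is activated strictly after `w`
    (hafter : ∃ j, w ∈ act G t s j ∧ v ∉ act G t s j)
    -- `A` is the vertex set of the subtree `T₁` containing `w` obtained by deleting
    -- the edge `(v, w)`
    (A : Set V) (hA : A = {u : V | (G.deleteEdges {s(v, w)}).Reachable w u}) :
    Pervading (SimpleGraph.induce A G) (fun u => t u.val) (fun u => s u.val) k := by
  obtain ⟨j, hwj, hvj⟩ := hafter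
  -- v ∉ A
  have hbridge : ¬ (G.deleteEdges {s(v, w)}).Reachable v w := by
    have := (SimpleGraph.isAcyclic_iff_forall_adj_isBridge.mp hT.2) hadj
    exact SimpleGraph.isBridge_iff.mp this
  have hvA : v ∉ A := by
    rw [hA]
    intro h
    exact hbridge h.symm
  -- neighbors of nodes in A stay in A except the edge (v,w)
  have hnbr : ∀ u, u ∈ A → ∀ x, G.Adj x u → x ∉ A → x = v ∧ u = w := by
    intro u hu x hxu hxA
    by_cases he : s(x, u) = s(v, w)
    · rcases Sym2.eq_iff.mp he with ⟨rfl, rfl⟩ | ⟨rfl, rfl⟩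
      · exact ⟨rfl, rfl⟩
      · exact absurd hu hvA
    · exfalso
      apply hxA
      rw [hA] at hu ⊢
      have hadj' : (G.deleteEdges {s(v, w)}).Adj u x := by
        rw [SimpleGraph.deleteEdges_adj]
        refine ⟨hxu.symm, ?_⟩
        simp only [Set.mem_singleton_iff]
        rw [Sym2.eq_iff] at he ⊢
        tauto
      exact hu.trans hadj'.reachable
  set G₁ := SimpleGraph.induce A G with hG₁
  set t₁ : A → ℕ := fun u => t u.val
  set s₁ : A → ℕ := fun u => s u.val
  have key : ∀ m, ∀ u, ∀ hu : u ∈ A, u ∈ act G t s m → ⟨u, hu⟩ ∈ act G₁ t₁ s₁ m := by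
    intro m
    induction m with
    | zero =>
      intro u hu hm
      rw [act] at hm ⊢
      simp only [Finset.mem_filter, Finset.mem_univ, true_and] at hm ⊢
      exact hm
    | succ n ih =>
      intro u hu hm
      rw [act] at hm
      by_cases hprev : u ∈ act G t s n
      · rw [act]
        simp only [Finset.mem_union]
        exact Or.inl (ih u hu hprev)
      simp only [Finset.mem_union] at hm
      rcases hm with h | h
      · exact absurd h hprev
      simp only [Finset.mem_filter, Finset.mem_univ, true_and] at h
      -- v is not active at round n (if u = w)
      have hvn : u = w → v ∉ act G t s n := by
        rintro rfl hvn
        have h1 : ¬ j ≤ n := fun hle => hprev (act_mono G t s hle hwj)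
        have h2 : ¬ n ≤ j := fun hle => hvj (act_mono G t s hle hvn)
        omega
      -- every active neighbor of u lies in A
      have hsub : (act G t s n).filter (fun x => G.Adj x u) ⊆
          Finset.image Subtype.val ((act G₁ t₁ s₁ n).filter
            (fun x => G₁.Adj x ⟨u, hu⟩)) := by
        intro x hx
        rw [Finset.mem_filter] at hx
        have hxA : x ∈ A := by
          by_contra hxA
          obtain ⟨rfl, rfl⟩ := hnbr u hu x hx.2 hxA
          exact hvn rfl hx.1
        refine Finset.mem_image.mpr ⟨⟨x, hxA⟩, ?_, rfl⟩
        rw [Finset.mem_filter]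
        exact ⟨ih x hxA hx.1, hx.2⟩
      have hcard : ((act G t s n).filter (fun x => G.Adj x u)).card ≤
          ((act G₁ t₁ s₁ n).filter (fun x => G₁.Adj x ⟨u, hu⟩)).card := by
        calc _ ≤ (Finset.image Subtype.val ((act G₁ t₁ s₁ n).filter
              (fun x => G₁.Adj x ⟨u, hu⟩))).card := Finset.card_le_card hsub
          _ ≤ _ := Finset.card_image_le
      rw [act]
      simp only [Finset.mem_union, Finset.mem_filter, Finset.mem_univ, true_and]
      exact Or.inr (h.trans (Nat.add_le_add_left hcard (s u)))
  constructor
  · exact fun u => hperv.1 u.val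
  · obtain ⟨J, hJ⟩ := hperv.2
    refine ⟨J, Finset.eq_univ_iff_forall.mpr ?_⟩
    rintro ⟨u, hu⟩
    exact key J u hu (hJ ▸ Finset.mem_univ u)
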